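/- Let τ > 0, ε > 0, α < 1, Λ > 0, and let v : (Λ, ∞) → ℂ be differentiable with v(λ) e^{τ v(λ)} = −λ e^{τ ε λ^α} for all λ > Λ. Assume Re v(λ) → +∞ as λ → ∞ and that Im v(λ) remains bounded as λ → ∞. Then |v(λ)|/λ → 0 as λ → ∞, and consequently Re v(λ) − ε λ^α = (1/τ) ln(λ/|v(λ)|) → +∞ as λ → ∞. -/

import Mathlib

open Filter Set

/-- If `Re v(λ) → ∞` and `Im v(λ)` stays bounded along a differentiable branch of
solutions of the transformed characteristic equation `v e^{τ v} = -λ e^{τ ε λ^α}`, then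
`|v(λ)|/λ → 0` and consequently `Re v(λ) - ε λ^α = (1/τ) ln(λ/|v(λ)|) → ∞`. -/
theorem transformed_char_branch_re_growth (τ ε α Λ : ℝ)
    (hτ : 0 < τ) (hε : 0 < ε) (hα : α < 1) (hΛ : 0 < Λ)
    (v : ℝ → ℂ)
    (hdiff : ∀ lam ∈ Ioi Λ, DifferentiableAt ℝ v lam)
    (heq : ∀ lam ∈ Ioi Λ,
      v lam * Complex.exp ((τ : ℂ) * v lam) = -(lam : ℂ) * (Real.exp (τ * ε * lam ^ α) : ℂ))
    (hre : Tendsto (fun lam => (v lam).re) atTop atTop)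
    (him : ∃ M : ℝ, ∀ lam ∈ Ioi Λ, |(v lam).im| ≤ M) :
    Tendsto (fun lam => ‖v lam‖ / lam) atTop (nhds 0) ∧
    (∀ lam ∈ Ioi Λ,
      (v lam).re - ε * lam ^ α = (1 / τ) * Real.log (lam / ‖v lam‖)) ∧
    Tendsto (fun lam => (v lam).re - ε * lam ^ α) atTop atTop := by
  obtain ⟨M, hM⟩ := him
  have hvne : ∀ lam ∈ Ioi Λ, v lam ≠ 0 := by
    intro lam hlam h0
    have hlampos : 0 < lam := hΛ.trans hlam
    have h := heq lam hlam
    rw [h0, zero_mul] at h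
    have hne : -(lam : ℂ) * (Real.exp (τ * ε * lam ^ α) : ℂ) ≠ 0 := by
      apply mul_ne_zero
      · simpa using hlampos.ne'
      · exact_mod_cast (Real.exp_pos _).ne'
    exact hne h.symm
  have habs : ∀ lam ∈ Ioi Λ, ‖v lam‖ * Real.exp (τ * (v lam).re)
      = lam * Real.exp (τ * ε * lam ^ α) := by
    intro lam hlam
    have hlampos : 0 < lam := hΛ.trans hlam
    have h := congrArg (‖·‖) (heq lam hlam)
    simpa [map_mul, Complex.norm_exp, Complex.norm_real, Complex.mul_re,
      abs_of_pos hlampos, abs_of_pos (Real.exp_pos _)] using h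
  have hkey : ∀ lam ∈ Ioi Λ, (v lam).re - ε * lam ^ α
      = (1 / τ) * Real.log (lam / ‖v lam‖) := by
    intro lam hlam
    have hlampos : 0 < lam := hΛ.trans hlam
    have hvpos : 0 < ‖v lam‖ := by
      simpa using hvne lam hlam
    have h := habs lam hlam
    have hlog := congrArg Real.log h
    rw [Real.log_mul hvpos.ne' (Real.exp_pos _).ne',
      Real.log_mul hlampos.ne' (Real.exp_pos _).ne', Real.log_exp, Real.log_exp] at hlog
    rw [Real.log_div hlampos.ne' hvpos.ne']
    field_simp
    linarith
  -- eventual upper bound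
  have hev : ∀ᶠ lam in atTop, lam ∈ Ioi Λ ∧ 1 ≤ (v lam).re :=
    (eventually_gt_atTop Λ).and (hre.eventually_ge_atTop 1)
  have hub : ∀ᶠ lam in atTop, ‖v lam‖ / lam
      ≤ (ε * lam ^ α + (1 / τ) * Real.log lam + M) / lam := by
    filter_upwards [hev] with lam ⟨hlam, hre1⟩
    have hlampos : 0 < lam := hΛ.trans hlam
    have hvge1 : (1 : ℝ) ≤ ‖v lam‖ := hre1.trans (Complex.re_le_norm _)
    have hdivle : lam / ‖v lam‖ ≤ lam := by
      rw [div_le_iff₀ (by linarith)]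
      nlinarith
    have hdivpos : 0 < lam / ‖v lam‖ := div_pos hlampos (by linarith)
    have hlogle : Real.log (lam / ‖v lam‖) ≤ Real.log lam :=
      Real.log_le_log hdivpos hdivle
    have hrub : (v lam).re ≤ ε * lam ^ α + (1 / τ) * Real.log lam := by
      have := hkey lam hlam
      have h1 : (1 / τ) * Real.log (lam / ‖v lam‖) ≤ (1 / τ) * Real.log lam :=
        mul_le_mul_of_nonneg_left hlogle (by positivity)
      linarith
    have habsle : ‖v lam‖ ≤ (v lam).re + M := by
      have h1 := Complex.norm_le_abs_re_add_abs_im (v lam)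
      have h2 := hM lam hlam
      rw [abs_of_pos (by linarith : (0:ℝ) < (v lam).re)] at h1
      linarith
    have : ‖v lam‖ ≤ ε * lam ^ α + (1 / τ) * Real.log lam + M := by linarith
    exact div_le_div_of_nonneg_right this hlampos.le |>.trans_eq rfl
  have hg0 : Tendsto (fun lam => (ε * lam ^ α + (1 / τ) * Real.log lam + M) / lam)
      atTop (nhds 0) := by
    have h1 : Tendsto (fun lam : ℝ => ε * lam ^ α / lam) atTop (nhds 0) := by
      have h := tendsto_rpow_neg_atTop (by linarith : (0:ℝ) < 1 - α)
      have h' : Tendsto (fun lam : ℝ => ε * lam ^ (-(1 - α))) atTop (nhds (ε * 0)) :=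
        h.const_mul ε
      rw [mul_zero] at h'
      apply h'.congr'
      filter_upwards [eventually_gt_atTop (0:ℝ)] with lam hlam
      rw [show -(1 - α) = α - 1 by ring, Real.rpow_sub hlam, Real.rpow_one]
      ring
    have h2 : Tendsto (fun lam : ℝ => (1 / τ) * Real.log lam / lam) atTop (nhds 0) := by
      have h := Real.isLittleO_log_id_atTop.tendsto_div_nhds_zero
      have h' : Tendsto (fun lam : ℝ => (1 / τ) * (Real.log lam / lam)) atTop
          (nhds ((1 / τ) * 0)) := h.const_mul _
      rw [mul_zero] at h'
      exact h'.congr (fun lam => by ring)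
    have h3 : Tendsto (fun lam : ℝ => M / lam) atTop (nhds 0) :=
      tendsto_const_nhds.div_atTop tendsto_id
    have := (h1.add h2).add h3
    rw [add_zero, add_zero] at this
    exact this.congr (fun lam => by ring)
  have hpos : ∀ᶠ lam in atTop, 0 ≤ ‖v lam‖ / lam := by
    filter_upwards [eventually_gt_atTop (0:ℝ)] with lam hlam
    positivity
  have part1 : Tendsto (fun lam => ‖v lam‖ / lam) atTop (nhds 0) :=
    squeeze_zero' hpos hub hg0
  refine ⟨part1, hkey, ?_⟩
  -- part 3
  have hratio : Tendsto (fun lam => lam / ‖v lam‖) atTop atTop := by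
    have hposs : ∀ᶠ lam in atTop, ‖v lam‖ / lam ∈ Ioi (0:ℝ) := by
      filter_upwards [hev] with lam ⟨hlam, hre1⟩
      have hlampos : 0 < lam := hΛ.trans hlam
      have hvpos : 0 < ‖v lam‖ := by simpa using hvne lam hlam
      exact div_pos hvpos hlampos
    have h0 : Tendsto (fun lam => ‖v lam‖ / lam) atTop (nhdsWithin (0:ℝ) (Ioi 0)) :=
      tendsto_nhdsWithin_iff.2 ⟨part1, hposs⟩
    have hinv := h0.inv_tendsto_nhdsGT_zero
    apply hinv.congr
    intro lam
    simp [Pi.inv_apply, inv_div]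
  have hlogt : Tendsto (fun lam => (1 / τ) * Real.log (lam / ‖v lam‖))
      atTop atTop := by
    have := Real.tendsto_log_atTop.comp hratio
    exact this.const_mul_atTop (by positivity)
  apply hlogt.congr'
  filter_upwards [eventually_gt_atTop Λ] with lam hlam
  exact (hkey lam hlam).symm
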